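/- Let Λ = ⊕_{g∈G} Λ_g be a strongly G-graded ring with identity component Δ, let e ∈ Δ be a full idempotent, and let g ∈ G. Then Λ_g ≅ Δ as Δ-bimodules if and only if eΛ_g e ≅ eΔe as eΔe-bimodules. -/

import Mathlib

open Pointwise
/-- A strong grading of the ring `Λ` by the group `G`: `Λ` is the internal direct
sum of the additive subgroups `A g`, and `A g * A h = A (g * h)` for all `g, h`. -/
structure IsStrongGrading {G Λ : Type*} [Group G] [Ring Λ] [DecidableEq G]
    (A : G → AddSubgroup Λ) : Prop where
  internal : DirectSum.IsInternal A
  one_mem : (1 : Λ) ∈ A 1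
  mul_mem : ∀ (g h : G), ∀ a ∈ A g, ∀ b ∈ A h, a * b ∈ A (g * h)
  strong : ∀ g h : G, A (g * h) ≤ AddSubgroup.closure ((A g : Set Λ) * (A h : Set Λ))

/-- `Λ_g ≅ Λ_h` as `Δ`-bimodules (`Δ = Λ_1`): an additive equivalence compatible
with left and right multiplication by elements of the identity component. -/
def ComponentBimodIso {G Λ : Type*} [Group G] [Ring Λ]
    (A : G → AddSubgroup Λ) (g h : G) : Prop :=
  ∃ f : A g ≃+ A h,
    (∀ d ∈ A (1 : G), ∀ x y : A g, (y : Λ) = d * (x : Λ) → ((f y : Λ) = d * (f x : Λ))) ∧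
    (∀ d ∈ A (1 : G), ∀ x y : A g, (y : Λ) = (x : Λ) * d → ((f y : Λ) = (f x : Λ) * d))

/-- The additive endomorphism `x ↦ e * x * e` of a ring. -/
def cornerHom {Λ : Type*} [Ring Λ] (e : Λ) : Λ →+ Λ :=
  (AddMonoidHom.mulLeft e).comp (AddMonoidHom.mulRight e)

section Aux
variable {G Λ : Type*} [Group G] [Ring Λ] [DecidableEq G] {A : G → AddSubgroup Λ}

lemma aux_corner_apply {e : Λ} (x : Λ) : cornerHom e x = e * (x * e) := rfl

lemma aux_mull (hA : IsStrongGrading A) {k : G} {d x : Λ} (hd : d ∈ A (1:G)) (hx : x ∈ A k) :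
    d * x ∈ A k := by simpa using hA.mul_mem 1 k d hd x hx

lemma aux_mulr (hA : IsStrongGrading A) {k : G} {d x : Λ} (hd : d ∈ A (1:G)) (hx : x ∈ A k) :
    x * d ∈ A k := by simpa using hA.mul_mem k 1 x hx d hd

lemma aux_ecl {e : Λ} (hid : e * e = e) {S : AddSubgroup Λ} {z : Λ}
    (hz : z ∈ S.map (cornerHom e)) : e * z = z := by
  obtain ⟨w, -, rfl⟩ := hz
  show e * (e * (w * e)) = e * (w * e)
  rw [← mul_assoc, hid]

lemma aux_ecr {e : Λ} (hid : e * e = e) {S : AddSubgroup Λ} {z : Λ}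
    (hz : z ∈ S.map (cornerHom e)) : z * e = z := by
  obtain ⟨w, -, rfl⟩ := hz
  show (e * (w * e)) * e = e * (w * e)
  rw [mul_assoc, mul_assoc, hid]

lemma aux_corner_sub (hA : IsStrongGrading A) {e : Λ} (he : e ∈ A (1:G)) {k : G} {z : Λ}
    (hz : z ∈ (A k).map (cornerHom e)) : z ∈ A k := by
  obtain ⟨w, hw, rfl⟩ := hz
  exact aux_mull hA he (aux_mulr hA he hw)

lemma aux_edez {e : Λ} (hid : e * e = e) {S : AddSubgroup Λ} {d z : Λ}
    (hz : z ∈ S.map (cornerHom e)) : (e * d * e) * z = cornerHom e (d * z) := by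
  have h1 := aux_ecl hid hz
  have h2 := aux_ecr hid hz
  show _ = e * ((d * z) * e)
  rw [mul_assoc (e*d) e z, h1, mul_assoc d z e, h2, mul_assoc]

lemma aux_zede {e : Λ} (hid : e * e = e) {S : AddSubgroup Λ} {d z : Λ}
    (hz : z ∈ S.map (cornerHom e)) : z * (e * d * e) = cornerHom e (z * d) := by
  have h1 := aux_ecl hid hz
  have h2 := aux_ecr hid hz
  show z * (e * d * e) = e * ((z * d) * e)
  have h3 : e * ((z * d) * e) = (z * d) * e := by rw [← mul_assoc, ← mul_assoc, h1]
  rw [h3, ← mul_assoc, ← mul_assoc, h2]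

lemma aux_cornerL (hA : IsStrongGrading A) {e : Λ} (he : e ∈ A (1:G)) (hid : e * e = e)
    {k : G} {d z : Λ} (hd : d ∈ A (1:G)) (hz : z ∈ (A k).map (cornerHom e)) :
    (e * d * e) * z ∈ (A k).map (cornerHom e) :=
  AddSubgroup.mem_map.mpr ⟨d * z, aux_mull hA hd (aux_corner_sub hA he hz), (aux_edez hid hz).symm⟩

lemma aux_cornerR (hA : IsStrongGrading A) {e : Λ} (he : e ∈ A (1:G)) (hid : e * e = e)
    {k : G} {d z : Λ} (hd : d ∈ A (1:G)) (hz : z ∈ (A k).map (cornerHom e)) :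
    z * (e * d * e) ∈ (A k).map (cornerHom e) :=
  AddSubgroup.mem_map.mpr ⟨z * d, aux_mulr hA hd (aux_corner_sub hA he hz), (aux_zede hid hz).symm⟩

lemma aux_symmL {B C : AddSubgroup Λ} (f : B ≃+ C) (d : Λ)
    (hmem : ∀ y ∈ B, d * y ∈ B)
    (hL : ∀ x y : B, (y : Λ) = d * x → ((f y : Λ) = d * (f x : Λ))) :
    ∀ x y : C, (y : Λ) = d * x → ((f.symm y : Λ) = d * (f.symm x : Λ)) := by
  intro x y hxy
  have hm : d * ((f.symm x : Λ)) ∈ B := hmem _ (f.symm x).2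
  have h1 : (f ⟨d * (f.symm x : Λ), hm⟩ : Λ) = d * (f (f.symm x) : Λ) := hL (f.symm x) _ rfl
  rw [f.apply_symm_apply] at h1
  have h2 : f ⟨d * (f.symm x : Λ), hm⟩ = y := Subtype.ext (h1.trans hxy.symm)
  rw [← h2, f.symm_apply_apply]

lemma aux_symmR {B C : AddSubgroup Λ} (f : B ≃+ C) (d : Λ)
    (hmem : ∀ y ∈ B, y * d ∈ B)
    (hR : ∀ x y : B, (y : Λ) = (x : Λ) * d → ((f y : Λ) = (f x : Λ) * d)) :
    ∀ x y : C, (y : Λ) = (x : Λ) * d → ((f.symm y : Λ) = (f.symm x : Λ) * d) := by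
  intro x y hxy
  have hm : ((f.symm x : Λ)) * d ∈ B := hmem _ (f.symm x).2
  have h1 : (f ⟨(f.symm x : Λ) * d, hm⟩ : Λ) = (f (f.symm x) : Λ) * d := hR (f.symm x) _ rfl
  rw [f.apply_symm_apply] at h1
  have h2 : f ⟨(f.symm x : Λ) * d, hm⟩ = y := Subtype.ext (h1.trans hxy.symm)
  rw [← h2, f.symm_apply_apply]

lemma aux_decomp (hA : IsStrongGrading A) (e : Λ)
    (hfull : AddSubgroup.closure
        {x : Λ | ∃ a ∈ A (1 : G), ∃ b ∈ A (1 : G), x = a * e * b} = A (1 : G)) :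
    ∃ n : ℕ, ∃ a b : Fin n → Λ, (∀ i, a i ∈ A (1:G)) ∧ (∀ i, b i ∈ A (1:G)) ∧
      ∑ i, a i * e * b i = 1 := by
  have h1 : (1 : Λ) ∈ AddSubgroup.closure
      {x : Λ | ∃ a ∈ A (1 : G), ∃ b ∈ A (1 : G), x = a * e * b} := by
    rw [hfull]; exact hA.one_mem
  refine AddSubgroup.closure_induction
    (p := fun x _ => ∃ n : ℕ, ∃ a b : Fin n → Λ, (∀ i, a i ∈ A (1:G)) ∧ (∀ i, b i ∈ A (1:G)) ∧
      ∑ i, a i * e * b i = x) ?_ ?_ ?_ ?_ h1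
  · rintro x ⟨p, hp, q, hq, rfl⟩
    exact ⟨1, fun _ => p, fun _ => q, fun _ => hp, fun _ => hq, by simp⟩
  · exact ⟨0, fun i => 0, fun i => 0, fun i => i.elim0, fun i => i.elim0, by simp⟩
  · rintro x y _ _ ⟨n₁, a₁, b₁, ha₁, hb₁, hs₁⟩ ⟨n₂, a₂, b₂, ha₂, hb₂, hs₂⟩
    refine ⟨n₁ + n₂, Fin.append a₁ a₂, Fin.append b₁ b₂, ?_, ?_, ?_⟩
    · intro i
      refine Fin.addCases (fun i => ?_) (fun i => ?_) i
      · rw [Fin.append_left]; exact ha₁ i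
      · rw [Fin.append_right]; exact ha₂ i
    · intro i
      refine Fin.addCases (fun i => ?_) (fun i => ?_) i
      · rw [Fin.append_left]; exact hb₁ i
      · rw [Fin.append_right]; exact hb₂ i
    · rw [Fin.sum_univ_add]
      simp only [Fin.append_left, Fin.append_right]
      rw [hs₁, hs₂]
  · rintro x _ ⟨n, a, b, ha, hb, hs⟩
    refine ⟨n, fun i => -(a i), b, fun i => neg_mem (ha i), hb, ?_⟩
    simp only [neg_mul]
    rw [Finset.sum_neg_distrib, hs]

lemma aux_dist (e : Λ) {n : ℕ} (a b : Fin n → Λ) (hsum : ∑ i, a i * e * b i = 1) (t : Λ) :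
    ∑ j, a j * (e * (b j * t)) = t := by
  calc ∑ j, a j * (e * (b j * t)) = ∑ j, a j * e * b j * t :=
        Finset.sum_congr rfl fun j _ => by simp only [mul_assoc]
    _ = (∑ j, a j * e * b j) * t := (Finset.sum_mul _ _ _).symm
    _ = t := by rw [hsum, one_mul]

lemma aux_sand (e : Λ) {n : ℕ} (a b : Fin n → Λ) (hsum : ∑ i, a i * e * b i = 1) (y : Λ) :
    ∑ i, ∑ j, a i * cornerHom e (b i * y * a j) * b j = y := by
  have hsum1 : ∑ j, a j * (e * b j) = 1 := by simpa only [mul_assoc] using hsum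
  simp only [aux_corner_apply, mul_assoc, ← Finset.mul_sum]
  rw [hsum1, mul_one]
  exact aux_dist e a b hsum y

end Aux

section Core
variable {G Λ : Type*} [Group G] [Ring Λ] [DecidableEq G] {A : G → AddSubgroup Λ}

lemma aux_core (hA : IsStrongGrading A) {e : Λ} (he : e ∈ A (1:G)) (hid : e * e = e)
    {k m : G} (φ : Λ → Λ)
    (hφmem : ∀ z ∈ (A k).map (cornerHom e), φ z ∈ (A m).map (cornerHom e))
    (hφ0 : φ 0 = 0)
    (hφadd : ∀ z ∈ (A k).map (cornerHom e), ∀ w ∈ (A k).map (cornerHom e),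
      φ (z + w) = φ z + φ w)
    (hφL : ∀ d ∈ A (1:G), ∀ z ∈ (A k).map (cornerHom e),
      φ ((e * d * e) * z) = (e * d * e) * φ z)
    (hφR : ∀ d ∈ A (1:G), ∀ z ∈ (A k).map (cornerHom e),
      φ (z * (e * d * e)) = φ z * (e * d * e))
    {n : ℕ} (a b : Fin n → Λ) (ha : ∀ i, a i ∈ A (1:G)) (hb : ∀ i, b i ∈ A (1:G))
    (hsum : ∑ i, a i * e * b i = 1)
    {u v x : Λ} (hu : u ∈ A (1:G)) (hv : v ∈ A (1:G)) (hx : x ∈ A k) :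
    cornerHom e (u * (∑ i, ∑ j, a i * φ (cornerHom e (b i * x * a j)) * b j) * v)
      = φ (cornerHom e (u * x * v)) := by
  classical
  have hee : ∀ t : Λ, e * (e * t) = e * t := fun t => by rw [← mul_assoc, hid]
  have hz : ∀ i j : Fin n, cornerHom e (b i * x * a j) ∈ (A k).map (cornerHom e) := fun i j =>
    AddSubgroup.mem_map.mpr ⟨_, aux_mulr hA (ha j) (aux_mull hA (hb i) hx), rfl⟩
  have hp : ∀ i j : Fin n, φ (cornerHom e (b i * x * a j)) ∈ (A m).map (cornerHom e) :=
    fun i j => hφmem _ (hz i j)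
  have hpl : ∀ (i j : Fin n) (t : Λ),
      e * (φ (cornerHom e (b i * x * a j)) * t) = φ (cornerHom e (b i * x * a j)) * t :=
    fun i j t => by rw [← mul_assoc, aux_ecl hid (hp i j)]
  have hpr : ∀ (i j : Fin n) (t : Λ),
      φ (cornerHom e (b i * x * a j)) * (e * t) = φ (cornerHom e (b i * x * a j)) * t :=
    fun i j t => by rw [← mul_assoc, aux_ecr hid (hp i j)]
  -- termwise identity
  have hterm : ∀ i j : Fin n,
      cornerHom e (u * (a i * φ (cornerHom e (b i * x * a j)) * b j) * v)
        = φ ((e * (u * a i) * e) * cornerHom e (b i * x * a j) * (e * (b j * v) * e)) := by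
    intro i j
    rw [hφR (b j * v) (aux_mull hA (hb j) hv) _
        (aux_cornerL hA he hid (aux_mulr hA (ha i) hu) (hz i j)),
      hφL (u * a i) (aux_mulr hA (ha i) hu) _ (hz i j)]
    set p := φ (cornerHom e (b i * x * a j)) with hpdef
    show e * ((u * (a i * p * b j) * v) * e) = _
    simp only [mul_assoc]
    rw [hpl i j, hpr i j]
  -- finite additivity of φ on the corner subgroup
  have hφsum : ∀ (c : Fin n → Λ), (∀ j, c j ∈ (A k).map (cornerHom e)) →
      φ (∑ j, c j) = ∑ j, φ (c j) := by
    intro c hc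
    have hgen : ∀ s : Finset (Fin n), φ (∑ j ∈ s, c j) = ∑ j ∈ s, φ (c j) := by
      intro s
      induction s using Finset.induction_on with
      | empty => simpa using hφ0
      | insert _ _ hnotmem ih =>
          rw [Finset.sum_insert hnotmem, Finset.sum_insert hnotmem,
            hφadd _ (hc _) _ (sum_mem fun j _ => hc j), ih]
    exact hgen _
  have hQ : ∀ i j : Fin n,
      (e * (u * a i) * e) * cornerHom e (b i * x * a j) * (e * (b j * v) * e)
        ∈ (A k).map (cornerHom e) := fun i j =>
    aux_cornerR hA he hid (aux_mull hA (hb j) hv)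
      (aux_cornerL hA he hid (aux_mulr hA (ha i) hu) (hz i j))
  calc cornerHom e (u * (∑ i, ∑ j, a i * φ (cornerHom e (b i * x * a j)) * b j) * v)
      = ∑ i, ∑ j, cornerHom e (u * (a i * φ (cornerHom e (b i * x * a j)) * b j) * v) := by
        simp only [Finset.mul_sum, Finset.sum_mul, map_sum]
    _ = ∑ i, ∑ j, φ ((e * (u * a i) * e) * cornerHom e (b i * x * a j) * (e * (b j * v) * e)) :=
        Finset.sum_congr rfl fun i _ => Finset.sum_congr rfl fun j _ => hterm i j
    _ = φ (∑ i, ∑ j,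
          (e * (u * a i) * e) * cornerHom e (b i * x * a j) * (e * (b j * v) * e)) := by
        rw [hφsum _ (fun i => sum_mem fun j _ => hQ i j)]
        exact Finset.sum_congr rfl fun i _ => (hφsum _ (fun j => hQ i j)).symm
    _ = φ (cornerHom e (u * x * v)) := by
        refine congrArg φ ?_
        have hstep : ∑ i, ∑ j,
            (e * (u * a i) * e) * cornerHom e (b i * x * a j) * (e * (b j * v) * e)
            = ∑ i, ∑ j, e * (u * (a i * (e * (b i * (x * (a j * (e * (b j * (v * e))))))))) :=
          Finset.sum_congr rfl fun i _ => Finset.sum_congr rfl fun j _ => by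
            show (e * (u * a i) * e) * (e * ((b i * x * a j) * e)) * (e * (b j * v) * e) = _
            simp only [mul_assoc, hee]
        rw [hstep]
        show _ = e * ((u * x * v) * e)
        simp only [mul_assoc, ← Finset.mul_sum]
        rw [aux_dist e a b hsum, aux_dist e a b hsum]

end Core

section Fix
variable {Λ : Type*} [Ring Λ]

lemma aux_fix {B C : AddSubgroup Λ} (e : Λ) (F : B ≃+ C)
    (hL : ∀ x y : B, (y : Λ) = e * x → ((F y : Λ) = e * (F x : Λ)))
    (hR : ∀ x y : B, (y : Λ) = (x : Λ) * e → ((F y : Λ) = (F x : Λ) * e))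
    {x : Λ} (hx : x ∈ B) (hxe : x * e ∈ B) (hexe : e * (x * e) ∈ B)
    (hcx : e * (x * e) = x) :
    (F ⟨x, hx⟩ : Λ) = e * ((F ⟨x, hx⟩ : Λ) * e) := by
  have h1 : (F ⟨x * e, hxe⟩ : Λ) = (F ⟨x, hx⟩ : Λ) * e := hR ⟨x, hx⟩ ⟨x * e, hxe⟩ rfl
  have h2 : (F ⟨e * (x * e), hexe⟩ : Λ) = e * (F ⟨x * e, hxe⟩ : Λ) :=
    hL ⟨x * e, hxe⟩ ⟨e * (x * e), hexe⟩ rfl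
  have h3 : (⟨e * (x * e), hexe⟩ : B) = ⟨x, hx⟩ := Subtype.ext hcx
  rw [h3] at h2
  rw [h1] at h2
  exact h2

lemma aux_self_corner {e : Λ} (hid : e * e = e) {S : AddSubgroup Λ} {z : Λ}
    (hz : z ∈ S.map (cornerHom e)) : e * (z * e) = z := by
  rw [aux_ecr hid hz, aux_ecl hid hz]

end Fix



/-- Let `Λ` be strongly `G`-graded with identity component `Δ`,
and let `e ∈ Δ` be a full idempotent. Then `Λ_g ≅ Δ` as `Δ`-bimodules if and
only if `eΛ_ge ≅ eΔe` as `eΔe`-bimodules. -/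
theorem bimodIso_iff_corner_bimodIso {G Λ : Type*} [Group G] [Ring Λ] [DecidableEq G]
    (A : G → AddSubgroup Λ) (hA : IsStrongGrading A) (e : Λ)
    (he : e ∈ A (1 : G)) (hid : e * e = e)
    (hfull : AddSubgroup.closure
        {x : Λ | ∃ a ∈ A (1 : G), ∃ b ∈ A (1 : G), x = a * e * b} = A (1 : G))
    (g : G) :
    ComponentBimodIso A g 1 ↔
      ∃ f : (A g).map (cornerHom e) ≃+ (A (1 : G)).map (cornerHom e),
        (∀ d ∈ A (1 : G), ∀ x y : (A g).map (cornerHom e),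
          (y : Λ) = (e * d * e) * (x : Λ) → ((f y : Λ) = (e * d * e) * (f x : Λ))) ∧
        (∀ d ∈ A (1 : G), ∀ x y : (A g).map (cornerHom e),
          (y : Λ) = (x : Λ) * (e * d * e) → ((f y : Λ) = (f x : Λ) * (e * d * e))) := by
    classical
  have hede : ∀ d ∈ A (1:G), e * d * e ∈ A (1:G) := fun d hd =>
    aux_mulr hA he (aux_mull hA he hd)
  constructor
  · -- forward direction
    rintro ⟨f, hfL, hfR⟩
    have hsymL := aux_symmL f e (fun z hz => aux_mull hA he hz) (hfL e he)
    have hsymR := aux_symmR f e (fun z hz => aux_mulr hA he hz) (hfR e he)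
    have hto : ∀ z : (A g).map (cornerHom e),
        (f ⟨(z : Λ), aux_corner_sub hA he z.2⟩ : Λ) ∈ (A (1:G)).map (cornerHom e) := by
      intro z
      refine AddSubgroup.mem_map.mpr ⟨_, (f ⟨(z : Λ), aux_corner_sub hA he z.2⟩).2, ?_⟩
      exact (aux_fix e f (hfL e he) (hfR e he) _
        (aux_mulr hA he (aux_corner_sub hA he z.2))
        (aux_mull hA he (aux_mulr hA he (aux_corner_sub hA he z.2)))
        (aux_self_corner hid z.2)).symm
    have hinv : ∀ w : (A (1:G)).map (cornerHom e),
        (f.symm ⟨(w : Λ), aux_corner_sub hA he w.2⟩ : Λ) ∈ (A g).map (cornerHom e) := by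
      intro w
      refine AddSubgroup.mem_map.mpr ⟨_, (f.symm ⟨(w : Λ), aux_corner_sub hA he w.2⟩).2, ?_⟩
      exact (aux_fix e f.symm hsymL hsymR _
        (aux_mulr hA he (aux_corner_sub hA he w.2))
        (aux_mull hA he (aux_mulr hA he (aux_corner_sub hA he w.2)))
        (aux_self_corner hid w.2)).symm
    refine ⟨⟨⟨fun z => ⟨_, hto z⟩, fun w => ⟨_, hinv w⟩, ?_, ?_⟩, ?_⟩, ?_, ?_⟩
    · intro z
      apply Subtype.ext
      show (f.symm ⟨(f ⟨(z : Λ), _⟩ : Λ), _⟩ : Λ) = (z : Λ)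
      rw [show (⟨(f ⟨(z : Λ), aux_corner_sub hA he z.2⟩ : Λ), _⟩ : A (1:G))
            = f ⟨(z : Λ), aux_corner_sub hA he z.2⟩ from rfl, f.symm_apply_apply]
    · intro w
      apply Subtype.ext
      show (f ⟨(f.symm ⟨(w : Λ), _⟩ : Λ), _⟩ : Λ) = (w : Λ)
      rw [show (⟨(f.symm ⟨(w : Λ), aux_corner_sub hA he w.2⟩ : Λ), _⟩ : A g)
            = f.symm ⟨(w : Λ), aux_corner_sub hA he w.2⟩ from rfl, f.apply_symm_apply]
    · intro z w
      apply Subtype.ext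
      show (f ⟨(z : Λ) + (w : Λ), _⟩ : Λ) = (f ⟨(z : Λ), _⟩ : Λ) + (f ⟨(w : Λ), _⟩ : Λ)
      rw [show (⟨(z : Λ) + (w : Λ), aux_corner_sub hA he (z + w).2⟩ : A g)
            = ⟨(z : Λ), aux_corner_sub hA he z.2⟩ + ⟨(w : Λ), aux_corner_sub hA he w.2⟩
          from rfl, map_add]
      rfl
    · intro d hd x y hxy
      exact hfL (e * d * e) (hede d hd) _ _ hxy
    · intro d hd x y hxy
      exact hfR (e * d * e) (hede d hd) _ _ hxy
  · -- backward direction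
    rintro ⟨f, hfL, hfR⟩
    obtain ⟨n, a, b, ha, hb, hsum⟩ := aux_decomp hA e hfull
    set φ : Λ → Λ :=
      fun z => if h : z ∈ (A g).map (cornerHom e) then ((f ⟨z, h⟩ : Λ)) else 0 with hφdef
    set ψ : Λ → Λ :=
      fun z => if h : z ∈ (A (1:G)).map (cornerHom e) then ((f.symm ⟨z, h⟩ : Λ)) else 0 with hψdef
    have hφcoe : ∀ (z : Λ) (h : z ∈ (A g).map (cornerHom e)), φ z = (f ⟨z, h⟩ : Λ) := by
      intro z h; rw [hφdef]; exact dif_pos h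
    have hψcoe : ∀ (z : Λ) (h : z ∈ (A (1:G)).map (cornerHom e)),
        ψ z = (f.symm ⟨z, h⟩ : Λ) := by
      intro z h; rw [hψdef]; exact dif_pos h
    have hφmem : ∀ z ∈ (A g).map (cornerHom e), φ z ∈ (A (1:G)).map (cornerHom e) := by
      intro z h; rw [hφcoe z h]; exact (f ⟨z, h⟩).2
    have hψmem : ∀ z ∈ (A (1:G)).map (cornerHom e), ψ z ∈ (A g).map (cornerHom e) := by
      intro z h; rw [hψcoe z h]; exact (f.symm ⟨z, h⟩).2
    have hφ0 : φ 0 = 0 := by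
      rw [hφcoe 0 (zero_mem _),
        show (⟨(0 : Λ), zero_mem _⟩ : (A g).map (cornerHom e)) = 0 from rfl, map_zero]
      rfl
    have hψ0 : ψ 0 = 0 := by
      rw [hψcoe 0 (zero_mem _),
        show (⟨(0 : Λ), zero_mem _⟩ : (A (1:G)).map (cornerHom e)) = 0 from rfl, map_zero]
      rfl
    have hφadd : ∀ z ∈ (A g).map (cornerHom e), ∀ w ∈ (A g).map (cornerHom e),
        φ (z + w) = φ z + φ w := by
      intro z hz w hw
      rw [hφcoe z hz, hφcoe w hw, hφcoe _ (add_mem hz hw),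
        show (⟨z + w, add_mem hz hw⟩ : (A g).map (cornerHom e)) = ⟨z, hz⟩ + ⟨w, hw⟩ from rfl,
        map_add]
      rfl
    have hψadd : ∀ z ∈ (A (1:G)).map (cornerHom e), ∀ w ∈ (A (1:G)).map (cornerHom e),
        ψ (z + w) = ψ z + ψ w := by
      intro z hz w hw
      rw [hψcoe z hz, hψcoe w hw, hψcoe _ (add_mem hz hw),
        show (⟨z + w, add_mem hz hw⟩ : (A (1:G)).map (cornerHom e)) = ⟨z, hz⟩ + ⟨w, hw⟩
          from rfl, map_add]
      rfl
    have hφL : ∀ d ∈ A (1:G), ∀ z ∈ (A g).map (cornerHom e),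
        φ ((e * d * e) * z) = (e * d * e) * φ z := by
      intro d hd z hz
      have hm : (e * d * e) * z ∈ (A g).map (cornerHom e) := aux_cornerL hA he hid hd hz
      rw [hφcoe _ hm, hφcoe z hz]
      exact hfL d hd ⟨z, hz⟩ ⟨_, hm⟩ rfl
    have hφR : ∀ d ∈ A (1:G), ∀ z ∈ (A g).map (cornerHom e),
        φ (z * (e * d * e)) = φ z * (e * d * e) := by
      intro d hd z hz
      have hm : z * (e * d * e) ∈ (A g).map (cornerHom e) := aux_cornerR hA he hid hd hz
      rw [hφcoe _ hm, hφcoe z hz]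
      exact hfR d hd ⟨z, hz⟩ ⟨_, hm⟩ rfl
    have hψL : ∀ d ∈ A (1:G), ∀ z ∈ (A (1:G)).map (cornerHom e),
        ψ ((e * d * e) * z) = (e * d * e) * ψ z := by
      intro d hd z hz
      have hm : (e * d * e) * z ∈ (A (1:G)).map (cornerHom e) := aux_cornerL hA he hid hd hz
      rw [hψcoe _ hm, hψcoe z hz]
      exact aux_symmL f (e * d * e) (fun w hw => aux_cornerL hA he hid hd hw)
        (hfL d hd) ⟨z, hz⟩ ⟨_, hm⟩ rfl
    have hψR : ∀ d ∈ A (1:G), ∀ z ∈ (A (1:G)).map (cornerHom e),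
        ψ (z * (e * d * e)) = ψ z * (e * d * e) := by
      intro d hd z hz
      have hm : z * (e * d * e) ∈ (A (1:G)).map (cornerHom e) := aux_cornerR hA he hid hd hz
      rw [hψcoe _ hm, hψcoe z hz]
      exact aux_symmR f (e * d * e) (fun w hw => aux_cornerR hA he hid hd hw)
        (hfR d hd) ⟨z, hz⟩ ⟨_, hm⟩ rfl
    have hψφ : ∀ z ∈ (A g).map (cornerHom e), ψ (φ z) = z := by
      intro z hz
      rw [hφcoe z hz, hψcoe _ (f ⟨z, hz⟩).2,
        show (⟨((f ⟨z, hz⟩ : Λ)), (f ⟨z, hz⟩).2⟩ : (A (1:G)).map (cornerHom e)) = f ⟨z, hz⟩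
          from rfl, f.symm_apply_apply]
    have hφψ : ∀ z ∈ (A (1:G)).map (cornerHom e), φ (ψ z) = z := by
      intro z hz
      rw [hψcoe z hz, hφcoe _ (f.symm ⟨z, hz⟩).2,
        show (⟨((f.symm ⟨z, hz⟩ : Λ)), (f.symm ⟨z, hz⟩).2⟩ : (A g).map (cornerHom e))
          = f.symm ⟨z, hz⟩ from rfl, f.apply_symm_apply]
    set F : Λ → Λ := fun x => ∑ i, ∑ j, a i * φ (cornerHom e (b i * x * a j)) * b j with hFdef
    set G' : Λ → Λ := fun y => ∑ i, ∑ j, a i * ψ (cornerHom e (b i * y * a j)) * b j with hGdef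
    have hzg : ∀ x ∈ A g, ∀ i j : Fin n,
        cornerHom e (b i * x * a j) ∈ (A g).map (cornerHom e) := fun x hx i j =>
      AddSubgroup.mem_map.mpr ⟨_, aux_mulr hA (ha j) (aux_mull hA (hb i) hx), rfl⟩
    have hz1 : ∀ y ∈ A (1:G), ∀ i j : Fin n,
        cornerHom e (b i * y * a j) ∈ (A (1:G)).map (cornerHom e) := fun y hy i j =>
      AddSubgroup.mem_map.mpr ⟨_, aux_mulr hA (ha j) (aux_mull hA (hb i) hy), rfl⟩
    have hFmem : ∀ x ∈ A g, F x ∈ A (1:G) := by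
      intro x hx
      rw [hFdef]
      exact sum_mem fun i _ => sum_mem fun j _ =>
        aux_mulr hA (hb j) (aux_mull hA (ha i)
          (aux_corner_sub hA he (hφmem _ (hzg x hx i j))))
    have hGmem : ∀ y ∈ A (1:G), G' y ∈ A g := by
      intro y hy
      rw [hGdef]
      exact sum_mem fun i _ => sum_mem fun j _ =>
        aux_mulr hA (hb j) (aux_mull hA (ha i)
          (aux_corner_sub hA he (hψmem _ (hz1 y hy i j))))
    have hkeyF : ∀ u ∈ A (1:G), ∀ v ∈ A (1:G), ∀ x ∈ A g,
        cornerHom e (u * F x * v) = φ (cornerHom e (u * x * v)) := by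
      intro u hu v hv x hx
      rw [hFdef]
      exact aux_core hA he hid φ hφmem hφ0 hφadd hφL hφR a b ha hb hsum hu hv hx
    have hkeyG : ∀ u ∈ A (1:G), ∀ v ∈ A (1:G), ∀ y ∈ A (1:G),
        cornerHom e (u * G' y * v) = ψ (cornerHom e (u * y * v)) := by
      intro u hu v hv y hy
      rw [hGdef]
      exact aux_core hA he hid ψ hψmem hψ0 hψadd hψL hψR a b ha hb hsum hu hv hy
    have hsand := aux_sand e a b hsum
    have hGF : ∀ x ∈ A g, G' (F x) = x := by
      intro x hx
      have h1 : ∀ i j : Fin n,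
          ψ (cornerHom e (b i * F x * a j)) = cornerHom e (b i * x * a j) := by
        intro i j
        rw [hkeyF (b i) (hb i) (a j) (ha j) x hx]
        exact hψφ _ (hzg x hx i j)
      calc G' (F x) = ∑ i, ∑ j, a i * ψ (cornerHom e (b i * F x * a j)) * b j := by rw [hGdef]
        _ = ∑ i, ∑ j, a i * cornerHom e (b i * x * a j) * b j :=
            Finset.sum_congr rfl fun i _ => Finset.sum_congr rfl fun j _ => by rw [h1 i j]
        _ = x := hsand x
    have hFG : ∀ y ∈ A (1:G), F (G' y) = y := by
      intro y hy
      have h1 : ∀ i j : Fin n,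
          φ (cornerHom e (b i * G' y * a j)) = cornerHom e (b i * y * a j) := by
        intro i j
        rw [hkeyG (b i) (hb i) (a j) (ha j) y hy]
        exact hφψ _ (hz1 y hy i j)
      calc F (G' y) = ∑ i, ∑ j, a i * φ (cornerHom e (b i * G' y * a j)) * b j := by rw [hFdef]
        _ = ∑ i, ∑ j, a i * cornerHom e (b i * y * a j) * b j :=
            Finset.sum_congr rfl fun i _ => Finset.sum_congr rfl fun j _ => by rw [h1 i j]
        _ = y := hsand y
    have hFadd : ∀ x ∈ A g, ∀ y ∈ A g, F (x + y) = F x + F y := by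
      intro x hx y hy
      have hterm : ∀ i j : Fin n, a i * φ (cornerHom e (b i * (x + y) * a j)) * b j
          = a i * φ (cornerHom e (b i * x * a j)) * b j
            + a i * φ (cornerHom e (b i * y * a j)) * b j := by
        intro i j
        have harg : cornerHom e (b i * (x + y) * a j)
            = cornerHom e (b i * x * a j) + cornerHom e (b i * y * a j) := by
          rw [← map_add]
          congr 1
          rw [mul_add, add_mul]
        rw [harg, hφadd _ (hzg x hx i j) _ (hzg y hy i j), mul_add, add_mul]
      rw [hFdef]
      calc (∑ i, ∑ j, a i * φ (cornerHom e (b i * (x + y) * a j)) * b j)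
          = ∑ i, ∑ j, (a i * φ (cornerHom e (b i * x * a j)) * b j
            + a i * φ (cornerHom e (b i * y * a j)) * b j) :=
            Finset.sum_congr rfl fun i _ => Finset.sum_congr rfl fun j _ => hterm i j
        _ = _ := by simp only [Finset.sum_add_distrib]
    have hFL : ∀ d ∈ A (1:G), ∀ x ∈ A g, F (d * x) = d * F x := by
      intro d hd x hx
      have h1 : ∀ i j : Fin n, φ (cornerHom e (b i * (d * x) * a j))
          = cornerHom e (b i * (d * F x) * a j) := by
        intro i j
        rw [show b i * (d * x) * a j = (b i * d) * x * a j from by rw [mul_assoc (b i) d x],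
          show b i * (d * F x) * a j = (b i * d) * F x * a j from by rw [mul_assoc (b i) d (F x)]]
        exact (hkeyF (b i * d) (aux_mulr hA hd (hb i)) (a j) (ha j) x hx).symm
      calc F (d * x) = ∑ i, ∑ j, a i * φ (cornerHom e (b i * (d * x) * a j)) * b j := by
            rw [hFdef]
        _ = ∑ i, ∑ j, a i * cornerHom e (b i * (d * F x) * a j) * b j :=
            Finset.sum_congr rfl fun i _ => Finset.sum_congr rfl fun j _ => by rw [h1 i j]
        _ = d * F x := hsand (d * F x)
    have hFR : ∀ d ∈ A (1:G), ∀ x ∈ A g, F (x * d) = F x * d := by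
      intro d hd x hx
      have h1 : ∀ i j : Fin n, φ (cornerHom e (b i * (x * d) * a j))
          = cornerHom e (b i * (F x * d) * a j) := by
        intro i j
        rw [show b i * (x * d) * a j = b i * x * (d * a j) from by
            rw [← mul_assoc, mul_assoc (b i * x) d (a j)],
          show b i * (F x * d) * a j = b i * F x * (d * a j) from by
            rw [← mul_assoc, mul_assoc (b i * F x) d (a j)]]
        exact (hkeyF (b i) (hb i) (d * a j) (aux_mull hA hd (ha j)) x hx).symm
      calc F (x * d) = ∑ i, ∑ j, a i * φ (cornerHom e (b i * (x * d) * a j)) * b j := by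
            rw [hFdef]
        _ = ∑ i, ∑ j, a i * cornerHom e (b i * (F x * d) * a j) * b j :=
            Finset.sum_congr rfl fun i _ => Finset.sum_congr rfl fun j _ => by rw [h1 i j]
        _ = F x * d := hsand (F x * d)
    refine ⟨⟨⟨fun x => ⟨F (x : Λ), hFmem _ x.2⟩, fun y => ⟨G' (y : Λ), hGmem _ y.2⟩,
      fun x => Subtype.ext (hGF _ x.2), fun y => Subtype.ext (hFG _ y.2)⟩,
      fun x y => Subtype.ext (hFadd _ x.2 _ y.2)⟩, ?_, ?_⟩
    · intro d hd x y hxy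
      show F (y : Λ) = d * F (x : Λ)
      rw [hxy]
      exact hFL d hd _ x.2
    · intro d hd x y hxy
      show F (y : Λ) = F (x : Λ) * d
      rw [hxy]
      exact hFR d hd _ x.2
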